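/- Let x₀ ∈ ℂ, let L = {x₀ + t·i : t ∈ [0,1]}, let L° = {x₀ + t·i : 0 < t < 1}, and let g : ℂ̂ → ℂ̂ be a continuous surjection of the extended plane such that g⁻¹({x₀}) = L and g⁻¹({x}) is a singleton for every x ≠ x₀. Let X ⊆ ℂ̂ be a locally connected continuum with x₀ ∈ X such that the closure of g⁻¹(X) \ L meets L exactly in the two points x₀ and x₀ + i. Then g⁻¹(X) \ L° is either a locally connected continuum or the union of two disjoint locally connected continua; that is, it has at most two connected components and each component is a locally connected continuum. -/

import Mathlib

open Set Topology OnePoint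
open Filter

noncomputable section

/-- The set of connected components of a subset `S`. -/
def comps {α : Type*} [TopologicalSpace α] (S : Set α) : Set (Set α) :=
  {C | ∃ z ∈ S, C = connectedComponentIn S z}

/-- The closed vertical segment `L` from `x₀` to `x₀ + i`, inside the extended
plane. -/
def seg (x₀ : ℂ) : Set (OnePoint ℂ) :=
  (fun t : ℝ => ((x₀ + t * Complex.I : ℂ) : OnePoint ℂ)) '' Icc (0 : ℝ) 1

/-- The open vertical segment `L°` from `x₀` to `x₀ + i`, inside the extended
plane. -/
def segO (x₀ : ℂ) : Set (OnePoint ℂ) :=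
  (fun t : ℝ => ((x₀ + t * Complex.I : ℂ) : OnePoint ℂ)) '' Ioo (0 : ℝ) 1

section Stmt16Aux

variable {α : Type*} [TopologicalSpace α]

/-- A subset is locally connected (as a subspace) iff every point has arbitrarily small
preconnected neighborhoods within the set. -/
theorem lc_subtype_iff {s : Set α} :
    LocallyConnectedSpace ↥s ↔
      ∀ x ∈ s, ∀ U ∈ 𝓝 x, ∃ N, N ⊆ s ∧ N ⊆ U ∧ N ∈ 𝓝[s] x ∧ IsPreconnected N := by
  constructor
  · intro h x hx U hU
    rw [locallyConnectedSpace_iff_connected_subsets] at h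
    obtain ⟨V, hV, hVpc, hVU⟩ := h ⟨x, hx⟩ (Subtype.val ⁻¹' U)
      (continuous_subtype_val.continuousAt.preimage_mem_nhds hU)
    refine ⟨Subtype.val '' V, ?_, ?_, ?_, ?_⟩
    · rintro _ ⟨y, _, rfl⟩; exact y.2
    · rintro _ ⟨y, hy, rfl⟩; exact hVU hy
    · rw [nhds_subtype_eq_comap_nhdsWithin] at hV
      obtain ⟨t, ht, hts⟩ := mem_comap.mp hV
      refine mem_of_superset (inter_mem self_mem_nhdsWithin ht) ?_
      rw [← Subtype.image_preimage_coe]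
      exact image_mono hts
    · exact IsInducing.subtypeVal.isPreconnected_image.mpr hVpc
  · intro h
    rw [locallyConnectedSpace_iff_connected_subsets]
    rintro ⟨x, hx⟩ U hU
    rw [nhds_subtype_eq_comap_nhdsWithin] at hU
    obtain ⟨t, ht, hts⟩ := mem_comap.mp hU
    obtain ⟨u, hu_open, hxu, hut⟩ := mem_nhdsWithin.mp ht
    obtain ⟨N, hNs, hNu, hNnhds, hNpc⟩ := h x hx u (hu_open.mem_nhds hxu)
    refine ⟨Subtype.val ⁻¹' N, ?_, ?_, ?_⟩
    · rw [nhds_subtype_eq_comap_nhdsWithin]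
      exact preimage_mem_comap hNnhds
    · have himg := Subtype.image_preimage_coe s N
      rw [inter_eq_self_of_subset_right hNs] at himg
      rw [← IsInducing.subtypeVal.isPreconnected_image, himg]
      exact hNpc
    · intro y hy
      exact hts (hut ⟨hNu hy, y.2⟩)

/-- Preimage of a closed preconnected set under a continuous surjection with preconnected
fibers from a compact Hausdorff space is preconnected ("monotone maps pull back connected
sets"). -/
theorem preimage_preconnected {β : Type*} [TopologicalSpace β] [T2Space β] [CompactSpace α] [T2Space α]
    {f : α → β} (hf : Continuous f) (hsurj : Function.Surjective f)
    (hfib : ∀ y, IsPreconnected (f ⁻¹' {y}))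
    {K : Set β} (hK : IsClosed K) (hKc : IsPreconnected K) :
    IsPreconnected (f ⁻¹' K) := by
  rw [isPreconnected_iff_subset_of_fully_disjoint_closed (hK.preimage hf)]
  intro u v hu hv hcover hdisj
  have hfib' : ∀ y ∈ K, f ⁻¹' {y} ⊆ u ∨ f ⁻¹' {y} ⊆ v := by
    intro y hy
    have hcl : IsClosed (f ⁻¹' {y}) := isClosed_singleton.preimage hf
    refine (isPreconnected_iff_subset_of_fully_disjoint_closed hcl).mp (hfib y) u v hu hv
      ?_ hdisj
    exact (preimage_mono (singleton_subset_iff.mpr hy)).trans hcover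
  have hAc : IsClosed (f '' (f ⁻¹' K ∩ u)) :=
    (((hK.preimage hf).inter hu).isCompact.image hf).isClosed
  have hBc : IsClosed (f '' (f ⁻¹' K ∩ v)) :=
    (((hK.preimage hf).inter hv).isCompact.image hf).isClosed
  have hKcover : K ⊆ f '' (f ⁻¹' K ∩ u) ∪ f '' (f ⁻¹' K ∩ v) := by
    intro y hy
    obtain ⟨x, rfl⟩ := hsurj y
    rcases hcover (show x ∈ f ⁻¹' K from hy) with hxu | hxv
    · exact Or.inl ⟨x, ⟨hy, hxu⟩, rfl⟩
    · exact Or.inr ⟨x, ⟨hy, hxv⟩, rfl⟩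
  have hdisj2 : Disjoint (f '' (f ⁻¹' K ∩ u)) (f '' (f ⁻¹' K ∩ v)) := by
    rw [disjoint_left]
    rintro y ⟨x₁, ⟨hx₁K, hx₁u⟩, rfl⟩ ⟨x₂, ⟨hx₂K, hx₂v⟩, hx₂⟩
    rcases hfib' (f x₁) hx₁K with h | h
    · exact disjoint_left.mp hdisj (h hx₂) hx₂v
    · exact disjoint_left.mp hdisj hx₁u (h rfl)
  rcases (isPreconnected_iff_subset_of_fully_disjoint_closed hK).mp hKc _ _ hAc hBc hKcover
      hdisj2 with h | h
  · left
    intro x hx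
    obtain ⟨x', ⟨_, hx'u⟩, hfx'⟩ := h hx
    rcases hfib' (f x) hx with hh | hh
    · exact hh rfl
    · exact (disjoint_left.mp hdisj hx'u (hh (show x' ∈ f ⁻¹' {f x} from hfx'))).elim
  · right
    intro x hx
    obtain ⟨x', ⟨_, hx'v⟩, hfx'⟩ := h hx
    rcases hfib' (f x) hx with hh | hh
    · exact (disjoint_left.mp hdisj (hh (show x' ∈ f ⁻¹' {f x} from hfx')) hx'v).elim
    · exact hh rfl


variable [CompactSpace α] [T2Space α]

/-- Every connected component of `W ∩ Z` (the part of a "saturated" connected compact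
set `W` outside the open segment) contains one of the two endpoints `a`, `b`. -/
theorem comp_mem_endpoints {Y Z L Lo O₆ : Set α} {a b : α}
    (hZdef : Z = Y \ Lo) (hO₆ : IsOpen O₆) (hYO₆ : Y ∩ O₆ = Lo)
    (hLclosed : IsClosed L) (hLoL : Lo ⊆ L)
    (hZL : Z ∩ L = {a, b}) (hZclosed : IsClosed Z)
    {W : Set α} (hWcomp : IsCompact W) (hWY : W ⊆ Y) (hLW : L ⊆ W)
    (hWconn : IsPreconnected W)
    {z : α} (hz : z ∈ W ∩ Z) :
    a ∈ connectedComponentIn (W ∩ Z) z ∨ b ∈ connectedComponentIn (W ∩ Z) z := by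
  by_contra hcon
  push_neg at hcon
  obtain ⟨ha, hb⟩ := hcon
  have haZL : a ∈ Z ∩ L := hZL ▸ mem_insert a {b}
  have hbZL : b ∈ Z ∩ L := hZL ▸ mem_insert_of_mem a rfl
  have haS : a ∈ W ∩ Z := ⟨hLW haZL.2, haZL.1⟩
  have hbS : b ∈ W ∩ Z := ⟨hLW hbZL.2, hbZL.1⟩
  have hScomp : IsCompact (W ∩ Z) := hWcomp.inter_right hZclosed
  haveI : CompactSpace ↥(W ∩ Z) := isCompact_iff_compactSpace.mp hScomp
  have him : connectedComponentIn (W ∩ Z) z =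
      Subtype.val '' connectedComponent (⟨z, hz⟩ : ↥(W ∩ Z)) := connectedComponentIn_eq_image hz
  have ha' : (⟨a, haS⟩ : ↥(W ∩ Z)) ∉ connectedComponent (⟨z, hz⟩ : ↥(W ∩ Z)) := by
    intro h; exact ha (him ▸ ⟨_, h, rfl⟩)
  have hb' : (⟨b, hbS⟩ : ↥(W ∩ Z)) ∉ connectedComponent (⟨z, hz⟩ : ↥(W ∩ Z)) := by
    intro h; exact hb (him ▸ ⟨_, h, rfl⟩)
  rw [connectedComponent_eq_iInter_isClopen, mem_iInter] at ha' hb'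
  push_neg at ha' hb'
  obtain ⟨⟨T₁, hT₁clopen, hzT₁⟩, haT₁⟩ := ha'
  obtain ⟨⟨T₂, hT₂clopen, hzT₂⟩, hbT₂⟩ := hb'
  set T : Set ↥(W ∩ Z) := T₁ ∩ T₂ with hT
  have hTclopen : IsClopen T := hT₁clopen.inter hT₂clopen
  obtain ⟨O₇, hO₇open, hO₇pre⟩ := isOpen_induced_iff.mp hTclopen.2
  set N : Set α := Subtype.val '' T with hNdef
  have hNeq : N = (W ∩ Z) ∩ O₇ := by
    rw [hNdef, ← hO₇pre, Subtype.image_preimage_coe]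
  have hNcomp : IsCompact N := (hTclopen.1.isCompact).image continuous_subtype_val
  have hNclosed : IsClosed N := hNcomp.isClosed
  have haN : a ∉ N := by
    rintro ⟨y, hyT, hya⟩
    rw [show y = ⟨a, haS⟩ from Subtype.ext hya] at hyT
    exact haT₁ hyT.1
  have hbN : b ∉ N := by
    rintro ⟨y, hyT, hya⟩
    rw [show y = ⟨b, hbS⟩ from Subtype.ext hya] at hyT
    exact hbT₂ hyT.2
  -- the separation of `W`
  set u : Set α := (O₆ ∪ O₇) ∩ Lᶜ with hu
  have huopen : IsOpen u := (hO₆.union hO₇open).inter hLclosed.isOpen_compl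
  have hWu : W ∩ u = N := by
    apply Subset.antisymm
    · rintro w ⟨hwW, hwu, hwL⟩
      rcases hwu with hw6 | hw7
      · exact absurd (hLoL (hYO₆ ▸ ⟨hWY hwW, hw6⟩)) hwL
      · have hwZ : w ∈ Z := hZdef ▸ ⟨hWY hwW, fun hlo => hwL (hLoL hlo)⟩
        rw [hNeq]
        exact ⟨⟨hwW, hwZ⟩, hw7⟩
    · intro n hn
      have hnS : n ∈ W ∩ Z := hNeq ▸ hn |>.1
      have hnO₇ : n ∈ O₇ := (hNeq ▸ hn).2
      have hnL : n ∉ L := by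
        intro hnL
        have : n ∈ ({a, b} : Set α) := hZL ▸ ⟨hnS.2, hnL⟩
        rcases this with rfl | rfl
        · exact haN hn
        · exact hbN hn
      exact ⟨hnS.1, Or.inr hnO₇, hnL⟩
  have hzN : z ∈ N := ⟨⟨z, hz⟩, ⟨hzT₁, hzT₂⟩, rfl⟩
  have hNu : N ⊆ u := by rw [← hWu]; exact inter_subset_right
  obtain ⟨w, hwW, hwu, hwN⟩ := hWconn u Nᶜ huopen hNclosed.isOpen_compl
    (fun w hw => by
      by_cases hwN : w ∈ N
      · exact Or.inl (hNu hwN)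
      · exact Or.inr hwN)
    ⟨z, hz.1, hNu hzN⟩
    ⟨a, hLW haZL.2, haN⟩
  exact hwN (hWu ▸ (⟨hwW, hwu⟩ : w ∈ W ∩ u))

/-- Small preconnected neighborhoods within `Z` at the endpoint `a`. -/
theorem nbhd_at_endpoint {g : α → α} (hgc : Continuous g) (hgs : Function.Surjective g)
    (hfib : ∀ y, IsPreconnected (g ⁻¹' {y}))
    {X Y Z L Lo O₆ : Set α} {x₀v a b : α}
    (hYdef : Y = g ⁻¹' X) (hZdef : Z = Y \ Lo)
    (hXclosed : IsClosed X) (hXlc : LocallyConnectedSpace ↥X) (hx₀X : x₀v ∈ X)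
    (hgL : g ⁻¹' {x₀v} = L)
    (hO₆ : IsOpen O₆) (hYO₆ : Y ∩ O₆ = Lo) (hLclosed : IsClosed L) (hLoL : Lo ⊆ L)
    (hZL : Z ∩ L = {a, b}) (hZclosed : IsClosed Z) (hab : a ≠ b)
    {U : Set α} (hU : U ∈ 𝓝 a) :
    ∃ N, N ⊆ Z ∧ N ⊆ U ∧ N ∈ 𝓝[Z] a ∧ IsPreconnected N := by
  have haZL : a ∈ Z ∩ L := hZL ▸ mem_insert a {b}
  have hbZL : b ∈ Z ∩ L := hZL ▸ mem_insert_of_mem a rfl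
  obtain ⟨O, hOU, hOopen, haO⟩ := mem_nhds_iff.mp hU
  obtain ⟨U₁', U₂, hU₁'open, hU₂open, haU₁', hbU₂, hdisj'⟩ := t2_separation hab
  set U₁ : Set α := U₁' ∩ O with hU₁def
  have hU₁open : IsOpen U₁ := hU₁'open.inter hOopen
  have haU₁ : a ∈ U₁ := ⟨haU₁', haO⟩
  have hdisj : Disjoint U₁ U₂ := hdisj'.mono_left inter_subset_left
  -- compact piece of Z away from the endpoints
  set K₀ : Set α := Z \ (U₁ ∪ U₂) with hK₀def
  have hK₀comp : IsCompact K₀ := (hZclosed.sdiff (hU₁open.union hU₂open)).isCompact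
  have himgcl : IsClosed (g '' K₀) := (hK₀comp.image hgc).isClosed
  have hx₀img : x₀v ∉ g '' K₀ := by
    rintro ⟨w, hwK₀, hw⟩
    have hwL : w ∈ L := hgL ▸ (show g w ∈ ({x₀v} : Set α) from hw)
    have : w ∈ ({a, b} : Set α) := hZL ▸ ⟨hwK₀.1, hwL⟩
    rcases this with rfl | rfl
    · exact hwK₀.2 (Or.inl haU₁)
    · exact hwK₀.2 (Or.inr hbU₂)
  obtain ⟨K', hK'nhds, hK'closed, hK'V₁⟩ :=
    exists_mem_nhds_isClosed_subset (himgcl.isOpen_compl.mem_nhds hx₀img)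
  obtain ⟨M, hMX, hMK', hMnhds, hMpc⟩ := lc_subtype_iff.mp hXlc x₀v hx₀X K' hK'nhds
  set K : Set α := closure M with hKdef
  have hKX : K ⊆ X := closure_minimal hMX hXclosed
  have hKV₁ : K ⊆ (g '' K₀)ᶜ := (closure_minimal hMK' hK'closed).trans hK'V₁
  have hKclosed : IsClosed K := isClosed_closure
  have hKpc : IsPreconnected K := hMpc.closure
  have hx₀M : x₀v ∈ M := mem_of_mem_nhdsWithin hx₀X hMnhds
  set W : Set α := g ⁻¹' K with hWdef
  have hWcomp : IsCompact W := (hKclosed.preimage hgc).isCompact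
  have hWY : W ⊆ Y := hYdef ▸ preimage_mono hKX
  have hLW : L ⊆ W := by
    rw [← hgL]
    exact preimage_mono (singleton_subset_iff.mpr (subset_closure hx₀M))
  have hWpc : IsPreconnected W := preimage_preconnected hgc hgs hfib hKclosed hKpc
  have hSsub : W ∩ Z ⊆ U₁ ∪ U₂ := by
    rintro w ⟨hwW, hwZ⟩
    by_contra hw
    exact hKV₁ hwW ⟨w, ⟨hwZ, hw⟩, rfl⟩
  have haS : a ∈ W ∩ Z := ⟨hLW haZL.2, haZL.1⟩
  have hbS : b ∈ W ∩ Z := ⟨hLW hbZL.2, hbZL.1⟩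
  set N : Set α := connectedComponentIn (W ∩ Z) a with hNdef
  have hNpc : IsPreconnected N := isPreconnected_connectedComponentIn
  have hNS : N ⊆ W ∩ Z := connectedComponentIn_subset _ _
  have hNU₁ : N ⊆ U₁ := hNpc.subset_left_of_subset_union hU₁open hU₂open hdisj
    (hNS.trans hSsub) ⟨a, mem_connectedComponentIn haS, haU₁⟩
  have hNZ : N ⊆ Z := hNS.trans inter_subset_right
  have hNU : N ⊆ U := hNU₁.trans (inter_subset_right.trans hOU)
  set Cb : Set α := connectedComponentIn (W ∩ Z) b with hCbdef
  have hCbU₂ : Cb ⊆ U₂ := isPreconnected_connectedComponentIn.subset_right_of_subset_union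
    hU₁open hU₂open hdisj ((connectedComponentIn_subset _ _).trans hSsub)
    ⟨b, mem_connectedComponentIn hbS, hbU₂⟩
  have hcover : W ∩ Z ⊆ N ∪ Cb := by
    intro w hw
    rcases comp_mem_endpoints hZdef hO₆ hYO₆ hLclosed hLoL hZL hZclosed hWcomp hWY hLW hWpc hw
      with h | h
    · exact Or.inl (by rw [hNdef, ← connectedComponentIn_eq h]; exact mem_connectedComponentIn hw)
    · exact Or.inr (by rw [hCbdef, ← connectedComponentIn_eq h]; exact mem_connectedComponentIn hw)
  have hScomp : IsCompact (W ∩ Z) := hWcomp.inter_right hZclosed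
  haveI : CompactSpace ↥(W ∩ Z) := isCompact_iff_compactSpace.mp hScomp
  have hCbclosed : IsClosed Cb := by
    rw [hCbdef, connectedComponentIn_eq_image hbS]
    exact (isClosed_connectedComponent.isCompact.image continuous_subtype_val).isClosed
  have haCb : a ∉ Cb := fun h => disjoint_left.mp hdisj haU₁ (hCbU₂ h)
  obtain ⟨t, htopen, hx₀t, hts⟩ := mem_nhdsWithin.mp hMnhds
  have hgaL : g a = x₀v := by
    have := hgL ▸ haZL.2; exact this
  have hNnhd : N ∈ 𝓝[Z] a := by
    rw [mem_nhdsWithin]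
    refine ⟨g ⁻¹' t ∩ Cbᶜ, (htopen.preimage hgc).inter hCbclosed.isOpen_compl,
      ⟨by rw [mem_preimage, hgaL]; exact hx₀t, haCb⟩, ?_⟩
    rintro w ⟨⟨hwt, hwCb⟩, hwZ⟩
    have hwY : w ∈ Y := (hZdef ▸ hwZ).1
    have hwX : g w ∈ X := by rw [hYdef] at hwY; exact hwY
    have hwM : g w ∈ M := hts ⟨hwt, hwX⟩
    have hwW : w ∈ W := subset_closure hwM
    rcases hcover ⟨hwW, hwZ⟩ with h | h
    · exact h
    · exact absurd h hwCb
  exact ⟨N, hNZ, hNU, hNnhd, hNpc⟩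

/-- Small preconnected neighborhoods within `Z` at every point. -/
theorem nbhd_in_Z {g : α → α} (hgc : Continuous g) (hgs : Function.Surjective g)
    (hfib : ∀ y, IsPreconnected (g ⁻¹' {y}))
    {X Y Z L Lo O₆ : Set α} {x₀v a b : α}
    (hginj : ∀ x, x ≠ x₀v → ∃ y, g ⁻¹' {x} = {y})
    (hYdef : Y = g ⁻¹' X) (hZdef : Z = Y \ Lo)
    (hXclosed : IsClosed X) (hXlc : LocallyConnectedSpace ↥X) (hx₀X : x₀v ∈ X)
    (hgL : g ⁻¹' {x₀v} = L)
    (hO₆ : IsOpen O₆) (hYO₆ : Y ∩ O₆ = Lo) (hLclosed : IsClosed L) (hLoL : Lo ⊆ L)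
    (hZL : Z ∩ L = {a, b}) (hZclosed : IsClosed Z) (hab : a ≠ b)
    {z : α} (hz : z ∈ Z) {U : Set α} (hU : U ∈ 𝓝 z) :
    ∃ N, N ⊆ Z ∧ N ⊆ U ∧ N ∈ 𝓝[Z] z ∧ IsPreconnected N := by
  by_cases hgz : g z = x₀v
  · -- `z` is one of the two endpoints
    have hzL : z ∈ L := hgL ▸ (show g z ∈ ({x₀v} : Set α) from hgz)
    have : z ∈ ({a, b} : Set α) := hZL ▸ ⟨hz, hzL⟩
    rcases this with rfl | rfl
    · exact nbhd_at_endpoint hgc hgs hfib hYdef hZdef hXclosed hXlc hx₀X hgL hO₆ hYO₆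
        hLclosed hLoL hZL hZclosed hab hU
    · exact nbhd_at_endpoint hgc hgs hfib hYdef hZdef hXclosed hXlc hx₀X hgL hO₆ hYO₆
        hLclosed hLoL (by rw [hZL, pair_comm]) hZclosed hab.symm hU
  · -- generic point: `g` is injective near `z`
    obtain ⟨y, hy⟩ := hginj (g z) hgz
    have hzy : y = z := by
      have : z ∈ ({y} : Set α) := hy ▸ (show z ∈ g ⁻¹' {g z} from rfl)
      exact this.symm
    subst hzy
    obtain ⟨O, hOU, hOopen, hzO⟩ := mem_nhds_iff.mp hU
    have himgcl : IsClosed (g '' Oᶜ) := (hOopen.isClosed_compl.isCompact.image hgc).isClosed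
    have hgzO : g y ∉ g '' Oᶜ := by
      rintro ⟨w, hwO, hw⟩
      have : w ∈ ({y} : Set α) := hy ▸ (show g w ∈ ({g y} : Set α) from hw)
      rw [this] at hwO
      exact hwO hzO
    set V : Set α := (g '' Oᶜ)ᶜ ∩ {x₀v}ᶜ with hVdef
    have hVopen : IsOpen V := himgcl.isOpen_compl.inter isClosed_singleton.isOpen_compl
    have hgzV : g y ∈ V := ⟨hgzO, hgz⟩
    obtain ⟨K', hK'nhds, hK'closed, hK'V⟩ :=
      exists_mem_nhds_isClosed_subset (hVopen.mem_nhds hgzV)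
    have hgzX : g y ∈ X := by
      have hzY : y ∈ Y := (hZdef ▸ hz).1
      rw [hYdef] at hzY; exact hzY
    obtain ⟨M, hMX, hMK', hMnhds, hMpc⟩ := lc_subtype_iff.mp hXlc (g y) hgzX K' hK'nhds
    set K : Set α := closure M with hKdef
    have hKX : K ⊆ X := closure_minimal hMX hXclosed
    have hKV : K ⊆ V := (closure_minimal hMK' hK'closed).trans hK'V
    have hgzM : g y ∈ M := mem_of_mem_nhdsWithin hgzX hMnhds
    set N : Set α := g ⁻¹' K with hNdef
    have hNpc : IsPreconnected N := preimage_preconnected hgc hgs hfib isClosed_closure hMpc.closure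
    have hNO : N ⊆ O := by
      intro w hw
      by_contra hwO
      exact (hKV hw).1 ⟨w, hwO, rfl⟩
    have hNZ : N ⊆ Z := by
      intro w hw
      rw [hZdef]
      refine ⟨hYdef ▸ hKX hw, fun hwLo => ?_⟩
      have hwL : w ∈ L := hLoL hwLo
      have hwpre : w ∈ g ⁻¹' {x₀v} := by rw [hgL]; exact hwL
      exact (hKV hw).2 hwpre
    obtain ⟨t, htopen, hgzt, hts⟩ := mem_nhdsWithin.mp hMnhds
    have hNnhd : N ∈ 𝓝[Z] y := by
      rw [mem_nhdsWithin]
      refine ⟨g ⁻¹' t, htopen.preimage hgc, hgzt, ?_⟩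
      rintro w ⟨hwt, hwZ⟩
      have hwY : w ∈ Y := (hZdef ▸ hwZ).1
      have hwX : g w ∈ X := by rw [hYdef] at hwY; exact hwY
      exact subset_closure (hts ⟨hwt, hwX⟩)
    exact ⟨N, hNZ, hNO.trans hOU, hNnhd, hNpc⟩


end Stmt16Aux

/-- under the collapsing map `g`, if `X` is a locally connected
continuum with `x₀ ∈ X` and `closure (g⁻¹(X) \ L) ∩ L = {x₀, x₀ + i}`, then
`g⁻¹(X) \ L°` has at most two connected components and each of its components
is a locally connected continuum. -/
theorem stmt_16 (x₀ : ℂ) (g : OnePoint ℂ → OnePoint ℂ)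
    (hgc : Continuous g) (hgs : Function.Surjective g)
    (hgL : g ⁻¹' {((x₀ : ℂ) : OnePoint ℂ)} = seg x₀)
    (hginj : ∀ x : OnePoint ℂ, x ≠ ((x₀ : ℂ) : OnePoint ℂ) → ∃ y, g ⁻¹' {x} = {y})
    (X : Set (OnePoint ℂ)) (hcomp : IsCompact X) (hconn : IsConnected X)
    (hlc : LocallyConnectedSpace ↥X)
    (hx₀ : ((x₀ : ℂ) : OnePoint ℂ) ∈ X)
    (hcl : closure (g ⁻¹' X \ seg x₀) ∩ seg x₀ =
      {((x₀ : ℂ) : OnePoint ℂ), ((x₀ + Complex.I : ℂ) : OnePoint ℂ)}) :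
    (∃ C₁ C₂ : Set (OnePoint ℂ), comps (g ⁻¹' X \ segO x₀) ⊆ {C₁, C₂}) ∧
    ∀ C ∈ comps (g ⁻¹' X \ segO x₀),
      IsCompact C ∧ IsConnected C ∧ LocallyConnectedSpace ↥C := by
  set p : OnePoint ℂ := ((x₀ : ℂ) : OnePoint ℂ) with hp
  set q : OnePoint ℂ := ((x₀ + Complex.I : ℂ) : OnePoint ℂ) with hq
  set f : ℝ → OnePoint ℂ := fun t : ℝ => ((x₀ + t * Complex.I : ℂ) : OnePoint ℂ) with hf
  set Y : Set (OnePoint ℂ) := g ⁻¹' X with hY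
  set Z : Set (OnePoint ℂ) := Y \ segO x₀ with hZ
  have hfcont : Continuous f :=
    OnePoint.continuous_coe.comp (continuous_const.add (Complex.continuous_ofReal.mul
      continuous_const))
  have hfinj : Function.Injective f := by
    intro s t h
    have h2 : (x₀ + (s : ℂ) * Complex.I) = x₀ + (t : ℂ) * Complex.I := OnePoint.coe_injective h
    have h3 := congrArg Complex.im h2
    simpa using h3
  have hf0 : f 0 = p := by simp [hf, hp]
  have hf1 : f 1 = q := by simp [hf, hq]
  have hpq : p ≠ q := by
    rw [hp, hq]
    intro h
    have h2 : x₀ = x₀ + Complex.I := OnePoint.coe_injective h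
    have : (Complex.I : ℂ) = 0 := by linear_combination -h2
    exact Complex.I_ne_zero this
  have hLcomp : IsCompact (seg x₀) := isCompact_Icc.image hfcont
  have hLclosed : IsClosed (seg x₀) := hLcomp.isClosed
  have hLoL : segO x₀ ⊆ seg x₀ := image_mono Ioo_subset_Icc_self
  have hfib : ∀ xv : OnePoint ℂ, IsPreconnected (g ⁻¹' {xv}) := by
    intro xv
    by_cases h : xv = p
    · rw [h, hp, hgL]
      exact isPreconnected_Icc.image f hfcont.continuousOn
    · obtain ⟨y, hy⟩ := hginj xv h
      rw [hy]
      exact isPreconnected_singleton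
  have hXclosed : IsClosed X := hcomp.isClosed
  have hYclosed : IsClosed Y := hXclosed.preimage hgc
  have hLY : seg x₀ ⊆ Y := hgL ▸ preimage_mono (singleton_subset_iff.mpr hx₀)
  have hsegdiff : seg x₀ \ segO x₀ = {p, q} := by
    rw [seg, segO, ← image_diff hfinj, Icc_diff_Ioo_same zero_le_one, image_pair]
    rw [hf0, hf1]
  have hZseg : Z ∩ seg x₀ = {p, q} := by
    rw [← hsegdiff]
    ext w
    simp only [hZ, mem_inter_iff, mem_diff]
    constructor
    · rintro ⟨⟨hwY, hwLo⟩, hwL⟩; exact ⟨hwL, hwLo⟩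
    · rintro ⟨hwL, hwLo⟩; exact ⟨⟨hLY hwL, hwLo⟩, hwL⟩
  have hpZseg : p ∈ Z ∩ seg x₀ := by rw [hZseg]; exact mem_insert _ _
  have hqZseg : q ∈ Z ∩ seg x₀ := by rw [hZseg]; exact mem_insert_of_mem _ rfl
  have hpnotLo : p ∉ segO x₀ := hpZseg.1.2
  have hqnotLo : q ∉ segO x₀ := hqZseg.1.2
  have hZeq : Z = closure (Y \ seg x₀) := by
    apply Subset.antisymm
    · rintro w ⟨hwY, hwLo⟩
      by_cases hwL : w ∈ seg x₀
      · have hw2 : w ∈ seg x₀ \ segO x₀ := ⟨hwL, hwLo⟩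
        rw [hsegdiff] at hw2
        have h2 : ({p, q} : Set (OnePoint ℂ)) ⊆ closure (Y \ seg x₀) := by
          rw [← hcl]; exact inter_subset_left
        exact h2 hw2
      · exact subset_closure ⟨hwY, hwL⟩
    · intro w hw
      have hwY : w ∈ Y := closure_minimal diff_subset hYclosed hw
      refine ⟨hwY, fun hwLo => ?_⟩
      have hw2 : w ∈ ({p, q} : Set (OnePoint ℂ)) := by rw [← hcl]; exact ⟨hw, hLoL hwLo⟩
      rcases hw2 with rfl | rfl
      · exact hpnotLo hwLo
      · exact hqnotLo hwLo
  have hZclosed : IsClosed Z := by rw [hZeq]; exact isClosed_closure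
  have hZcomp : IsCompact Z := hZclosed.isCompact
  -- the open set witnessing that `segO` is open in `Y`
  set O2 : Set (OnePoint ℂ) :=
    (fun z : ℂ => (z : OnePoint ℂ)) '' {w : ℂ | w.im - x₀.im ∈ Ioo (0:ℝ) 1} with hO2
  have hO2open : IsOpen O2 := OnePoint.isOpenEmbedding_coe.isOpenMap _
    (isOpen_Ioo.preimage (Complex.continuous_im.sub continuous_const))
  set O₆ : Set (OnePoint ℂ) := (closure (Y \ seg x₀))ᶜ ∩ O2 with hO₆def
  have hO₆open : IsOpen O₆ := isClosed_closure.isOpen_compl.inter hO2open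
  have himf : ∀ t : ℝ, ((x₀ + t * Complex.I : ℂ)).im - x₀.im = t := by
    intro t; simp
  have hYO₆ : Y ∩ O₆ = segO x₀ := by
    apply Subset.antisymm
    · rintro w ⟨hwY, hwcl, hwO2⟩
      have hwseg : w ∈ seg x₀ := by
        by_contra hwseg
        exact hwcl (subset_closure ⟨hwY, hwseg⟩)
      obtain ⟨t, ht, rfl⟩ := hwseg
      obtain ⟨v, hv, hveq⟩ := hwO2
      have hveq2 : v = x₀ + t * Complex.I := OnePoint.coe_injective hveq
      rw [hveq2, mem_setOf_eq, himf t] at hv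
      exact ⟨t, hv, rfl⟩
    · rintro _ ⟨t, ht, rfl⟩
      have htseg : f t ∈ seg x₀ := ⟨t, Ioo_subset_Icc_self ht, rfl⟩
      refine ⟨hLY htseg, ?_, ⟨x₀ + t * Complex.I, by rw [mem_setOf_eq, himf t]; exact ht, rfl⟩⟩
      intro hwcl
      have hw2 : f t ∈ ({p, q} : Set (OnePoint ℂ)) := by rw [← hcl]; exact ⟨hwcl, htseg⟩
      rcases hw2 with h | h
      · have h0 : t = 0 := hfinj (by rw [hf0]; exact h)
        rw [h0] at ht; exact lt_irrefl _ ht.1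
      · have h1 : t = 1 := hfinj (by rw [hf1]; exact h)
        rw [h1] at ht; exact lt_irrefl _ ht.2
  -- local connectedness of Z
  have hZlc : LocallyConnectedSpace ↥Z := by
    rw [lc_subtype_iff]
    intro z hz U hU
    exact nbhd_in_Z hgc hgs hfib hginj hY hZ hXclosed hlc hx₀ hgL hO₆open hYO₆ hLclosed
      hLoL hZseg hZclosed hpq hz hU
  have hYpc : IsPreconnected Y := preimage_preconnected hgc hgs hfib hXclosed
    hconn.isPreconnected
  have hYcomp : IsCompact Y := hYclosed.isCompact
  have hYZ : Y ∩ Z = Z := inter_eq_self_of_subset_right diff_subset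
  haveI : CompactSpace ↥Z := isCompact_iff_compactSpace.mp hZcomp
  constructor
  · refine ⟨connectedComponentIn Z p, connectedComponentIn Z q, ?_⟩
    rintro C ⟨z, hz, rfl⟩
    have hz' : z ∈ Y ∩ Z := by rw [hYZ]; exact hz
    simp only [mem_insert_iff, mem_singleton_iff]
    rcases comp_mem_endpoints hZ hO₆open hYO₆ hLclosed hLoL hZseg hZclosed hYcomp
      subset_rfl hLY hYpc hz' with h | h
    · left; rw [hYZ] at h; exact connectedComponentIn_eq h
    · right; rw [hYZ] at h; exact connectedComponentIn_eq h
  · rintro C ⟨z, hz, rfl⟩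
    refine ⟨?_, isConnected_connectedComponentIn_iff.mpr hz, ?_⟩
    · rw [connectedComponentIn_eq_image hz]
      exact isClosed_connectedComponent.isCompact.image continuous_subtype_val
    · obtain ⟨OC, hOCopen, hOCpre⟩ := isOpen_induced_iff.mp
        (isOpen_connectedComponent (x := (⟨z, hz⟩ : ↥Z)))
      have hCeq : Z ∩ OC = connectedComponentIn Z z := by
        rw [connectedComponentIn_eq_image hz, ← hOCpre, Subtype.image_preimage_coe]
      rw [lc_subtype_iff]
      intro c hc U hU
      have hcZ : c ∈ Z := connectedComponentIn_subset _ _ hc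
      have hcOC : c ∈ OC := by rw [← hCeq] at hc; exact hc.2
      obtain ⟨N, hNZ, hNsub, hNnhds, hNpc⟩ := nbhd_in_Z hgc hgs hfib hginj hY hZ hXclosed
        hlc hx₀ hgL hO₆open hYO₆ hLclosed hLoL hZseg hZclosed hpq hcZ
        (inter_mem hU (hOCopen.mem_nhds hcOC))
      refine ⟨N, ?_, fun w hw => (hNsub hw).1, ?_, hNpc⟩
      · intro w hw; rw [← hCeq]; exact ⟨hNZ hw, (hNsub hw).2⟩
      · obtain ⟨t, htopen, hct, hts⟩ := mem_nhdsWithin.mp hNnhds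
        rw [mem_nhdsWithin]
        exact ⟨t, htopen, hct, fun w hw => hts ⟨hw.1, connectedComponentIn_subset _ _ hw.2⟩⟩
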